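/- Let X ⊆ ℝⁿ be compact with Lebesgue measure λ, and S ⊆ X a Lebesgue measurable set. Suppose (w_k)_{k≥1} are Borel measurable functions on X with w_k ≥ 0 on X, w_k ≥ 1 on S, and ∫_X w_k dλ → λ(S). Then w_k converges to the indicator function 1_S in L¹(X, λ), i.e. ∫_X |w_k − 1_S| dλ → 0, and the running minima w̄_k := min_{1≤i≤k} w_i converge to 1_S almost uniformly on X: for every ε > 0 there is a measurable A ⊆ X with λ(A) < ε such that w̄_k → 1_S uniformly on X \ A. -/

import Mathlib

open MeasureTheory Filter Topology
open scoped ENNReal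

/-- The running minimum `w̄_k(x) = min_{i ≤ k} w_i(x)` of a sequence of functions. -/
noncomputable def runMin {α : Type*} (w : ℕ → α → ℝ) (k : ℕ) (x : α) : ℝ :=
  (Finset.range (k + 1)).inf' Finset.nonempty_range_add_one fun i => w i x

lemma runMin_succ {α : Type*} (w : ℕ → α → ℝ) (k : ℕ) (x : α) :
    runMin w (k + 1) x = min (w (k + 1) x) (runMin w k x) := by
  have h : Finset.range (k + 1 + 1) = insert (k + 1) (Finset.range (k + 1)) :=
    Finset.range_add_one
  rw [runMin, runMin]
  rw [Finset.inf'_congr (h₂ := fun i _ => rfl) (Finset.nonempty_range_add_one) h]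
  rw [Finset.inf'_insert]

lemma runMin_measurable {α : Type*} [MeasurableSpace α] (w : ℕ → α → ℝ)
    (hmeas : ∀ k, Measurable (w k)) (k : ℕ) : Measurable (runMin w k) := by
  induction k with
  | zero =>
    have : runMin w 0 = w 0 := by
      funext x; simp [runMin]
    rw [this]; exact hmeas 0
  | succ k ih =>
    have : runMin w (k + 1) = fun x => min (w (k + 1) x) (runMin w k x) := by
      funext x; exact runMin_succ w k x
    rw [this]
    exact (hmeas (k + 1)).min ih

lemma runMin_le {α : Type*} (w : ℕ → α → ℝ) (k : ℕ) (x : α) : runMin w k x ≤ w k x :=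
  Finset.inf'_le _ (Finset.self_mem_range_succ k)

lemma runMin_antitone {α : Type*} (w : ℕ → α → ℝ) (x : α) :
    Antitone fun k => runMin w k x := fun _ _ h =>
  Finset.inf'_mono _ (Finset.range_subset_range.2 (by omega)) _

lemma le_runMin {α : Type*} {w : ℕ → α → ℝ} {c : ℝ} {x : α} (h : ∀ i, c ≤ w i x) (k : ℕ) :
    c ≤ runMin w k x :=
  Finset.le_inf' _ _ fun i _ => h i

theorem dual_solutions_converge_to_indicator {n : ℕ}
    (X : Set (EuclideanSpace ℝ (Fin n))) (hX : IsCompact X)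
    (S : Set (EuclideanSpace ℝ (Fin n))) (hSX : S ⊆ X) (hS : MeasurableSet S)
    (w : ℕ → EuclideanSpace ℝ (Fin n) → ℝ)
    (hmeas : ∀ k, Measurable (w k))
    (hnonneg : ∀ k, ∀ x ∈ X, 0 ≤ w k x)
    (hge1 : ∀ k, ∀ x ∈ S, 1 ≤ w k x)
    (hconv : Tendsto (fun k => ∫⁻ x in X, ENNReal.ofReal (w k x)) atTop
      (𝓝 (volume S))) :
    Tendsto (fun k => ∫⁻ x in X, ENNReal.ofReal |w k x - S.indicator 1 x|) atTop (𝓝 0) ∧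
    ∀ ε : ℝ≥0∞, 0 < ε → ∃ A ⊆ X, MeasurableSet A ∧ volume A < ε ∧
      TendstoUniformlyOn (fun k => runMin w k) (S.indicator 1) atTop (X \ A) := by
  have hXm : MeasurableSet X := hX.isClosed.measurableSet
  have hXfin : volume X ≠ ⊤ := hX.measure_lt_top.ne
  have hSfin : volume S ≠ ⊤ := ((measure_mono hSX).trans_lt hX.measure_lt_top).ne
  -- key pointwise identity
  have hkey : ∀ k, ∫⁻ x in X, ENNReal.ofReal (w k x)
      = (∫⁻ x in X, ENNReal.ofReal |w k x - S.indicator 1 x|) + volume S := by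
    intro k
    have h1 : ∫⁻ x in X, ENNReal.ofReal (w k x)
        = ∫⁻ x in X, (ENNReal.ofReal |w k x - S.indicator 1 x|
            + S.indicator (fun _ : EuclideanSpace ℝ (Fin n) => (1:ℝ≥0∞)) x) := by
      apply setLIntegral_congr_fun hXm
      intro x hx
      beta_reduce
      by_cases hxS : x ∈ S
      · have h1w : 1 ≤ w k x := hge1 k x hxS
        rw [Set.indicator_of_mem hxS, Set.indicator_of_mem hxS]
        simp only [Pi.one_apply]
        rw [abs_of_nonneg (by linarith)]
        rw [← ENNReal.ofReal_one, ← ENNReal.ofReal_add (by linarith) zero_le_one]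
        ring_nf
      · have h0w : 0 ≤ w k x := hnonneg k x hx
        rw [Set.indicator_of_notMem hxS, Set.indicator_of_notMem hxS]
        rw [sub_zero, abs_of_nonneg h0w, add_zero]
    rw [h1, lintegral_add_right (g := fun x =>
        S.indicator (fun _ : EuclideanSpace ℝ (Fin n) => (1:ℝ≥0∞)) x)
        _ (measurable_one.indicator hS),
      lintegral_indicator_const hS 1, one_mul, Measure.restrict_apply hS,
      Set.inter_eq_left.2 hSX]
  -- Part 1: L¹ convergence
  have hpart1 : Tendsto (fun k => ∫⁻ x in X, ENNReal.ofReal |w k x - S.indicator 1 x|)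
      atTop (𝓝 0) := by
    have heq : ∀ k, ∫⁻ x in X, ENNReal.ofReal |w k x - S.indicator 1 x|
        = (∫⁻ x in X, ENNReal.ofReal (w k x)) - volume S := by
      intro k
      rw [hkey k, ENNReal.add_sub_cancel_right hSfin]
    have : Tendsto (fun k => (∫⁻ x in X, ENNReal.ofReal (w k x)) - volume S)
        atTop (𝓝 (volume S - volume S)) :=
      ENNReal.Tendsto.sub hconv tendsto_const_nhds (Or.inr hSfin)
    rw [tsub_self] at this
    exact this.congr fun k => (heq k).symm
  refine ⟨hpart1, ?_⟩
  -- Part 2: almost uniform convergence of running minima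
  set f : ℕ → EuclideanSpace ℝ (Fin n) → ℝ≥0∞ :=
    fun k x => ENNReal.ofReal (runMin w k x - S.indicator 1 x) with hf
  have hindm : Measurable (S.indicator (1 : EuclideanSpace ℝ (Fin n) → ℝ)) :=
    measurable_one.indicator hS
  have hmf : ∀ k, Measurable (f k) := fun k =>
    ((runMin_measurable w hmeas k).sub hindm).ennreal_ofReal
  have hind_le : ∀ x ∈ X, ∀ k, S.indicator 1 x ≤ runMin w k x := by
    intro x hx k
    by_cases hxS : x ∈ S
    · rw [Set.indicator_of_mem hxS]
      exact le_runMin (fun i => hge1 i x hxS) k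
    · rw [Set.indicator_of_notMem hxS]
      exact le_runMin (fun i => hnonneg i x hx) k
  have hf_le : ∀ k, ∫⁻ x in X, f k x
      ≤ ∫⁻ x in X, ENNReal.ofReal |w k x - S.indicator 1 x| := by
    intro k
    refine lintegral_mono_ae ((ae_restrict_iff' hXm).2 ?_)
    filter_upwards with x hx
    exact ENNReal.ofReal_le_ofReal
      ((sub_le_sub_right (runMin_le w k x) _).trans (le_abs_self _))
  have htend0 : Tendsto (fun k => ∫⁻ x in X, f k x) atTop (𝓝 0) :=
    tendsto_of_tendsto_of_tendsto_of_le_of_le tendsto_const_nhds hpart1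
      (fun _ => zero_le) hf_le
  set g : EuclideanSpace ℝ (Fin n) → ℝ≥0∞ := fun x => ⨅ k, f k x with hg
  have hgm : Measurable g := Measurable.iInf hmf
  have hg0 : ∫⁻ x in X, g x = 0 := by
    refine le_antisymm ?_ zero_le
    exact ge_of_tendsto' htend0 fun k => lintegral_mono fun x => iInf_le _ k
  have hae : ∀ᵐ x, x ∈ X → g x = 0 := by
    have := (lintegral_eq_zero_iff hgm).1 hg0
    exact (ae_restrict_iff' hXm).1 this
  have haetend : ∀ᵐ x, x ∈ X →
      Tendsto (fun k => runMin w k x) atTop (𝓝 (S.indicator 1 x)) := by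
    filter_upwards [hae] with x hxg hx
    have hanti : Antitone fun k => f k x := fun a b hab =>
      ENNReal.ofReal_le_ofReal (sub_le_sub_right (runMin_antitone w x hab) _)
    have h1 : Tendsto (fun k => f k x) atTop (𝓝 0) := by
      have := tendsto_atTop_iInf hanti
      rwa [show (⨅ k, f k x) = 0 from hxg hx] at this
    have h2 : Tendsto (fun k => (f k x).toReal) atTop (𝓝 0) := by
      have := (ENNReal.tendsto_toReal (a := 0) (by simp)).comp h1
      simpa [Function.comp_def] using this
    have h3 : ∀ k, (f k x).toReal = runMin w k x - S.indicator 1 x := fun k =>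
      ENNReal.toReal_ofReal (sub_nonneg.2 (hind_le x hx k))
    have h4 : Tendsto (fun k => runMin w k x - S.indicator 1 x) atTop (𝓝 0) :=
      h2.congr fun k => h3 k
    have := h4.add_const (S.indicator 1 x)
    simpa using this
  intro ε hε
  obtain ⟨δ, hδpos, hδlt⟩ : ∃ δ : ℝ, 0 < δ ∧ ENNReal.ofReal δ < ε := by
    rcases eq_or_ne ε ⊤ with rfl | hεt
    · exact ⟨1, one_pos, ENNReal.ofReal_lt_top⟩
    · have hpos : 0 < ε.toReal := ENNReal.toReal_pos hε.ne' hεt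
      refine ⟨ε.toReal / 2, by linarith, ?_⟩
      rw [ENNReal.ofReal_lt_iff_lt_toReal (by linarith) hεt]
      linarith
  obtain ⟨A, hAX, hAm, hAμ, hAconv⟩ :=
    tendstoUniformlyOn_of_ae_tendsto
      (fun k => (runMin_measurable w hmeas k).stronglyMeasurable)
      hindm.stronglyMeasurable hXm hXfin haetend hδpos
  exact ⟨A, hAX, hAm, hAμ.trans_lt hδlt, hAconv⟩
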